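/- Fix n ≥ 1. Let P be the poset whose elements are the pairs (i, σ) with 1 ≤ i ≤ n and σ ∈ {+, −}, together with one additional element c, with partial order generated by: (i, σ) < (j, τ) whenever i < j, (i, σ) and (i, −σ) are incomparable, and x < c for every x ≠ c. Let B = {x ∈ ℝ^n : ‖x‖ ≤ 1} be the closed unit ball and define s : B → P by s(x) = c if ‖x‖ < 1, and s(x) = (i₀, sign(x_{i₀})) if ‖x‖ = 1, where i₀ = max{ i : x_i ≠ 0 }. Then s is continuous when P is given the topology whose open sets are the upward-closed subsets; equivalently, for every q ∈ P the set s^{-1}({p : p ≥ q}) is open in B. -/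

import Mathlib

/-- A boundary stratum label `(i, σ)` with `i` an index and `σ ∈ {+,−}` a sign
(`true` = `+`). -/
structure Stratum (n : ℕ) where
  idx : Fin n
  sign : Bool

/-- The partial order generated by `(i, σ) < (j, τ)` whenever `i < j`, with `(i, +)` and
`(i, −)` incomparable.  The cone point `c` is adjoined as the top element `⊤` of
`WithTop (Stratum n)`. -/
instance (n : ℕ) : PartialOrder (Stratum n) where
  le a b := a = b ∨ a.idx < b.idx
  le_refl a := Or.inl rfl
  le_trans a b c hab hbc := by
    rcases hab with rfl | h
    · exact hbc
    · rcases hbc with rfl | h'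
      · exact Or.inr h
      · exact Or.inr (h.trans h')
  le_antisymm a b hab hba := by
    rcases hab with rfl | h
    · rfl
    · rcases hba with rfl | h'
      · rfl
      · exact absurd (h.trans h') (lt_irrefl _)

/-- The stratification of the closed unit ball `B ⊆ ℝ^n`: interior points go to the cone
point `⊤`, and a boundary point `x` (with `‖x‖ = 1`) goes to `(i₀, sign x_{i₀})` where
`i₀ = max {i : x_i ≠ 0}`. -/
noncomputable def strat (n : ℕ) (x : {y : EuclideanSpace ℝ (Fin n) // ‖y‖ ≤ 1}) :
    WithTop (Stratum n) := by
  classical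
  exact
    if ‖x.1‖ < 1 then ⊤
    else if hs : (Finset.univ.filter fun m : Fin n => x.1 m ≠ 0).Nonempty then
      ((⟨Finset.max' _ hs, decide (0 < x.1 (Finset.max' _ hs))⟩ : Stratum n) :
        WithTop (Stratum n))
    else ⊤

lemma Stratum.le_def {n : ℕ} (a b : Stratum n) : a ≤ b ↔ a = b ∨ a.idx < b.idx := Iff.rfl

lemma exists_coord_ne {n : ℕ} (x : {y : EuclideanSpace ℝ (Fin n) // ‖y‖ ≤ 1})
    (h : ¬ ‖x.1‖ < 1) : ∃ m, x.1 m ≠ 0 := by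
  have hx : x.1 ≠ 0 := by
    intro h0
    rw [h0, norm_zero] at h
    exact h one_pos
  by_contra hc
  push_neg at hc
  exact hx (PiLp.ext fun i => by simp [hc i])

lemma cont_eval {n : ℕ} (m : Fin n) :
    Continuous fun x : {y : EuclideanSpace ℝ (Fin n) // ‖y‖ ≤ 1} => x.1 m :=
  (EuclideanSpace.proj m).continuous.comp continuous_subtype_val

/-- The stratification of the hemispherical `n`-disk is continuous for the Alexandrov
upper topology on the stratifying poset: for every `q` in the poset, the preimage of the
up-set `{p : p ≥ q}` is open in the closed unit ball. -/
theorem strat_continuous (n : ℕ) (hn : 1 ≤ n) :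
    ∀ q : WithTop (Stratum n),
      IsOpen {x : {y : EuclideanSpace ℝ (Fin n) // ‖y‖ ≤ 1} | q ≤ strat n x} := by
  classical
  have hball : IsOpen {x : {y : EuclideanSpace ℝ (Fin n) // ‖y‖ ≤ 1} | ‖x.1‖ < 1} :=
    isOpen_lt (continuous_norm.comp continuous_subtype_val) continuous_const
  intro q
  induction q using WithTop.recTopCoe with
  | top =>
    have key : {x : {y : EuclideanSpace ℝ (Fin n) // ‖y‖ ≤ 1} |
        (⊤ : WithTop (Stratum n)) ≤ strat n x} = {x | ‖x.1‖ < 1} := by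
      ext x
      simp only [Set.mem_setOf_eq, top_le_iff]
      unfold strat
      by_cases h1 : ‖x.1‖ < 1
      · simp [h1]
      · obtain ⟨m, hm⟩ := exists_coord_ne x h1
        have hs : (Finset.univ.filter fun m : Fin n => x.1 m ≠ 0).Nonempty :=
          ⟨m, Finset.mem_filter.mpr ⟨Finset.mem_univ m, hm⟩⟩
        rw [if_neg h1, dif_pos hs]
        simp [h1]
    rw [key]; exact hball
  | coe s =>
    have key : {x : {y : EuclideanSpace ℝ (Fin n) // ‖y‖ ≤ 1} |
        (s : WithTop (Stratum n)) ≤ strat n x} =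
        ({x | ‖x.1‖ < 1} ∪ ⋃ m : Fin n, {x | s.idx < m ∧ x.1 m ≠ 0}) ∪
        {x | if s.sign then 0 < x.1 s.idx else x.1 s.idx < 0} := by
      ext x
      simp only [Set.mem_setOf_eq, Set.mem_union, Set.mem_iUnion]
      unfold strat
      by_cases h1 : ‖x.1‖ < 1
      · simp [h1, le_top]
      · obtain ⟨m', hm'⟩ := exists_coord_ne x h1
        have hs : (Finset.univ.filter fun m : Fin n => x.1 m ≠ 0).Nonempty :=
          ⟨m', Finset.mem_filter.mpr ⟨Finset.mem_univ m', hm'⟩⟩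
        rw [if_neg h1, dif_pos hs, WithTop.coe_le_coe, Stratum.le_def]
        set i0 := (Finset.univ.filter fun m : Fin n => x.1 m ≠ 0).max' hs with hi0
        have hi0mem : i0 ∈ Finset.univ.filter fun m : Fin n => x.1 m ≠ 0 :=
          Finset.max'_mem _ hs
        have hi0ne : x.1 i0 ≠ 0 := (Finset.mem_filter.mp hi0mem).2
        constructor
        · rintro (rfl | hlt)
          · right
            simp only
            by_cases hp : 0 < x.1 i0
            · simp [hp]
            · have : x.1 i0 < 0 := lt_of_le_of_ne (not_lt.mp hp) hi0ne
              simp [hp, not_lt.mp hp, this]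
          · exact Or.inl (Or.inr ⟨i0, hlt, hi0ne⟩)
        · rintro ((h | ⟨m, hm, hmne⟩) | h)
          · exact absurd h h1
          · right
            have : m ≤ i0 := Finset.le_max' _ m
              (Finset.mem_filter.mpr ⟨Finset.mem_univ m, hmne⟩)
            exact lt_of_lt_of_le hm this
          · have hsne : x.1 s.idx ≠ 0 := by
              by_cases hb : s.sign
              · simp only [hb, if_true] at h; exact ne_of_gt h
              · simp only [hb, if_false] at h; exact ne_of_lt h
            have hle : s.idx ≤ i0 := Finset.le_max' _ s.idx
              (Finset.mem_filter.mpr ⟨Finset.mem_univ s.idx, hsne⟩)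
            rcases lt_or_eq_of_le hle with hlt | heq
            · exact Or.inr hlt
            · left
              obtain ⟨si, ss⟩ := s
              simp only at heq h
              subst heq
              congr 1
              by_cases hb : ss
              · subst hb
                simp only [if_true] at h
                exact (decide_eq_true h).symm
              · simp only [Bool.not_eq_true] at hb
                subst hb
                simp only [if_false, Bool.false_eq] at h ⊢
                exact decide_eq_false (not_lt.mpr h.le)
    rw [key]
    apply IsOpen.union
    apply IsOpen.union hball
    · apply isOpen_iUnion
      intro m
      by_cases hm : s.idx < m
      · have : {x : {y : EuclideanSpace ℝ (Fin n) // ‖y‖ ≤ 1} | s.idx < m ∧ x.1 m ≠ 0}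
            = (fun x : {y : EuclideanSpace ℝ (Fin n) // ‖y‖ ≤ 1} => x.1 m) ⁻¹' {0}ᶜ := by
          ext x; simp [hm]
        rw [this]
        exact isOpen_compl_singleton.preimage (cont_eval m)
      · have : {x : {y : EuclideanSpace ℝ (Fin n) // ‖y‖ ≤ 1} | s.idx < m ∧ x.1 m ≠ 0}
            = ∅ := by ext x; simp [hm]
        rw [this]; exact isOpen_empty
    · by_cases hb : s.sign
      · simp only [hb, if_true]
        exact isOpen_lt continuous_const (cont_eval s.idx)
      · simp only [hb, if_false]
        exact isOpen_lt (cont_eval s.idx) continuous_const
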